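/- Let G be a simple graph on a countably infinite vertex set V such that the complement graph G^opp is connected. Then there exists a sequence (S_n)_{n∈ℕ} of finite subsets of V such that: S_n has exactly n + 2 elements for every n; S_n ⊆ S_{n+1} for every n; ⋃_n S_n = V; and for every n the induced subgraph of G^opp on S_n is connected. -/

import Mathlib

open scoped Classical

section Aux

variable {V : Type*}

private lemma induce_singleton_connected (H : SimpleGraph V) (w : V) :
    (H.induce {w}).Connected := by
  have hpre : (H.induce {w}).Preconnected := by
    rintro ⟨a, ha⟩ ⟨b, hb⟩
    have hab : a = b := by
      simp only [Set.mem_singleton_iff] at ha hb; rw [ha, hb]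
    subst hab
    exact SimpleGraph.Reachable.refl _
  haveI : Nonempty ({w} : Set V) := ⟨⟨w, rfl⟩⟩
  exact ⟨hpre⟩

private lemma insert_connected (H : SimpleGraph V) {s : Set V} {u w : V}
    (hs : (H.induce s).Connected) (hu : u ∈ s) (h : H.Adj u w) :
    (H.induce (insert w s)).Connected := by
  have := SimpleGraph.connected_induce_union hs.preconnected
    (induce_singleton_connected H w).preconnected hu (Set.mem_singleton w) h
  rwa [Set.union_singleton] at this

private lemma exists_exit (H : SimpleGraph V) (S : Finset V) :
    ∀ {u v : V} (p : H.Walk u v), u ∈ S → v ∉ S →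
      ∃ w, w ∉ S ∧ (∃ x ∈ S, H.Adj x w) ∧ ∃ q : H.Walk w v, q.length < p.length := by
  intro u v p
  induction p with
  | nil => intro hu hv; exact absurd hu hv
  | @cons a b c h p ih =>
    intro hu hv
    by_cases hb : b ∈ S
    · obtain ⟨w, hw, hx, q, hq⟩ := ih hb hv
      exact ⟨w, hw, hx, q, by simp only [SimpleGraph.Walk.length_cons]; omega⟩
    · exact ⟨b, hb, ⟨a, hu, h⟩, p, by simp [SimpleGraph.Walk.length_cons]⟩

private lemma step_lemma (H : SimpleGraph V) (hH : H.Connected) (S : Finset V)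
    (hS : (H.induce (S : Set V)).Connected) {v : V} (hv : v ∉ S) :
    ∃ w, w ∉ S ∧ (H.induce ((insert w S : Finset V) : Set V)).Connected ∧
      ∀ u ∈ S, H.dist w v < H.dist u v := by
  have hne : S.Nonempty := by
    obtain ⟨⟨x, hx⟩⟩ := hS.nonempty
    exact ⟨x, by simpa using hx⟩
  obtain ⟨u0, hu0, hmin⟩ := S.exists_min_image (fun u => H.dist u v) hne
  obtain ⟨p, hp⟩ := (hH u0 v).exists_walk_length_eq_dist
  obtain ⟨w, hwS, ⟨x, hxS, hadj⟩, q, hq⟩ := exists_exit H S p hu0 hv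
  refine ⟨w, hwS, ?_, ?_⟩
  · rw [Finset.coe_insert]
    exact insert_connected H hS (by simpa using hxS) hadj
  · intro u hu
    calc H.dist w v ≤ q.length := SimpleGraph.dist_le q
      _ < p.length := hq
      _ = H.dist u0 v := hp
      _ ≤ H.dist u v := hmin u hu

private lemma exists_missing [Infinite V] (S : Finset V) (e : ℕ ≃ V) : ∃ j, e j ∉ S := by
  obtain ⟨x, hx⟩ := Infinite.exists_notMem_finset S
  exact ⟨e.symm x, by simpa using hx⟩

private noncomputable def chain [Infinite V] (H : SimpleGraph V) (hH : H.Connected) (e : ℕ ≃ V)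
    (init : {S : Finset V // (H.induce (S : Set V)).Connected}) :
    ℕ → {S : Finset V // (H.induce (S : Set V)).Connected}
  | 0 => init
  | n + 1 =>
    ⟨insert (step_lemma H hH (chain H hH e init n).1 (chain H hH e init n).2
        (Nat.find_spec (exists_missing (chain H hH e init n).1 e))).choose
      (chain H hH e init n).1,
     (step_lemma H hH (chain H hH e init n).1 (chain H hH e init n).2
        (Nat.find_spec (exists_missing (chain H hH e init n).1 e))).choose_spec.2.1⟩

private lemma chain_spec [Infinite V] (H : SimpleGraph V) (hH : H.Connected) (e : ℕ ≃ V)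
    (init : {S : Finset V // (H.induce (S : Set V)).Connected}) (n : ℕ) :
    ∃ w, w ∉ (chain H hH e init n).1 ∧
      (chain H hH e init (n + 1)).1 = insert w (chain H hH e init n).1 ∧
      ∀ u ∈ (chain H hH e init n).1,
        H.dist w (e (Nat.find (exists_missing (chain H hH e init n).1 e))) <
          H.dist u (e (Nat.find (exists_missing (chain H hH e init n).1 e))) := by
  obtain ⟨h1, _, h3⟩ := (step_lemma H hH (chain H hH e init n).1 (chain H hH e init n).2
      (Nat.find_spec (exists_missing (chain H hH e init n).1 e))).choose_spec
  exact ⟨_, h1, rfl, h3⟩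

private lemma exists_adj (H : SimpleGraph V) [Nontrivial V] (hH : H.Connected) :
    ∃ u v, H.Adj u v := by
  obtain ⟨u, v, huv⟩ := exists_pair_ne V
  obtain ⟨p⟩ := hH u v
  cases p with
  | nil => exact absurd rfl huv
  | cons h _ => exact ⟨_, _, h⟩

end Aux

/-- If `G` is a simple graph on a countably infinite vertex set whose
complement `Gᶜ` is connected, then there is an increasing exhaustion of the
vertex set by finite subsets `S n` of cardinality `n + 2` on each of which the
induced subgraph of `Gᶜ` is connected. -/
theorem exists_exhaustion_by_connected_complement_subgraphs
    {V : Type*} [Countable V] [Infinite V]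
    (G : SimpleGraph V) (hconn : (Gᶜ).Connected) :
    ∃ S : ℕ → Finset V,
      (∀ n, (S n).card = n + 2) ∧
      (∀ n, S n ⊆ S (n + 1)) ∧
      (∀ v : V, ∃ n, v ∈ S n) ∧
      (∀ n, ((Gᶜ).induce ((S n : Set V))).Connected) := by
  obtain ⟨d⟩ := nonempty_denumerable V
  let e : ℕ ≃ V := (Denumerable.eqv V).symm
  obtain ⟨u, v, huv⟩ := exists_adj Gᶜ hconn
  have hne : u ≠ v := huv.ne
  have initconn : ((Gᶜ).induce (({u, v} : Finset V) : Set V)).Connected := by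
    have hcoe : (({u, v} : Finset V) : Set V) = {u, v} := by simp
    rw [hcoe]
    exact SimpleGraph.induce_pair_connected_of_adj huv
  let init : {S : Finset V // ((Gᶜ).induce (S : Set V)).Connected} := ⟨{u, v}, initconn⟩
  let C : ℕ → Finset V := fun n => (chain Gᶜ hconn e init n).1
  have mono : ∀ n, C n ⊆ C (n + 1) := by
    intro n
    obtain ⟨w, _, heq, _⟩ := chain_spec Gᶜ hconn e init n
    show (chain Gᶜ hconn e init n).1 ⊆ (chain Gᶜ hconn e init (n + 1)).1
    rw [heq]
    exact Finset.subset_insert _ _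
  have mono' : ∀ {m n : ℕ}, m ≤ n → C m ⊆ C n := by
    intro m n h
    induction n, h using Nat.le_induction with
    | base => exact subset_rfl
    | succ n hmn ih => exact ih.trans (mono n)
  have hcard : ∀ n, (C n).card = n + 2 := by
    intro n
    induction n with
    | zero => exact Finset.card_pair hne
    | succ n ih =>
      obtain ⟨w, hw, heq, _⟩ := chain_spec Gᶜ hconn e init n
      show (chain Gᶜ hconn e init (n + 1)).1.card = n + 1 + 2
      rw [heq, Finset.card_insert_of_notMem hw]
      have : (chain Gᶜ hconn e init n).1.card = n + 2 := ih
      omega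
  refine ⟨C, hcard, mono, ?_, fun n => (chain Gᶜ hconn e init n).2⟩
  suffices hcov : ∀ k, ∃ n, e k ∈ C n by
    intro x
    obtain ⟨n, hn⟩ := hcov (e.symm x)
    exact ⟨n, by simpa using hn⟩
  intro k
  induction k using Nat.strong_induction_on with
  | _ k IH =>
  have hmemN : ∀ j, j < k →
      e j ∈ C ((Finset.range k).sup (fun j => if h : j < k then Nat.find (IH j h) else 0)) := by
    intro j hj
    have h1 : e j ∈ C (Nat.find (IH j hj)) := Nat.find_spec (IH j hj)
    have h2 : Nat.find (IH j hj) ≤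
        (Finset.range k).sup (fun j => if h : j < k then Nat.find (IH j h) else 0) := by
      have := Finset.le_sup (f := fun j => if h : j < k then Nat.find (IH j h) else 0)
        (Finset.mem_range.mpr hj)
      simpa [hj] using this
    exact mono' h2 h1
  set N := (Finset.range k).sup (fun j => if h : j < k then Nat.find (IH j h) else 0) with hN
  have key : ∀ d n, N ≤ n → (∃ x ∈ C n, (Gᶜ).dist x (e k) ≤ d) → ∃ m, e k ∈ C m := by
    intro d
    induction d using Nat.strong_induction_on with
    | _ d IHd =>
      rintro n hn ⟨x, hx, hxd⟩
      by_cases hmem : e k ∈ C n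
      · exact ⟨n, hmem⟩
      · have hfind : Nat.find (exists_missing (C n) e) = k := by
          rw [Nat.find_eq_iff]
          refine ⟨hmem, ?_⟩
          intro j hj hjmem
          exact hjmem (mono' hn (hmemN j hj))
        obtain ⟨w, hw, heq, hlt⟩ := chain_spec Gᶜ hconn e init n
        rw [hfind] at hlt
        have hlt' : (Gᶜ).dist w (e k) < d := lt_of_lt_of_le (hlt x hx) hxd
        exact IHd ((Gᶜ).dist w (e k)) hlt' (n + 1) (hn.trans n.le_succ)
          ⟨w, by rw [show C (n+1) = insert w (C n) from heq]; exact Finset.mem_insert_self _ _,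
            le_rfl⟩
  have hneN : (C N).Nonempty := Finset.card_pos.mp (by rw [hcard N]; omega)
  obtain ⟨x, hx⟩ := hneN
  exact key ((Gᶜ).dist x (e k)) N le_rfl ⟨x, hx, le_rfl⟩
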